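/- Let K be an uncountable set with the discrete topology and K_∞ its one-point compactification, with C(K_∞) identified with its image in B(K) under restriction. Then u(C(K_∞)) − u(C(K_∞)) = {f ∈ B(K) : ∃ c ∈ ℝ, {x : f(x) ≠ c} at most countable}, and this space is σ-order complete. -/

import Mathlib

open OnePoint Filter

/-- f is a bounded real function (member of B(K)). -/
def Bdd {K : Type*} (f : K → ℝ) : Prop := ∃ C : ℝ, ∀ x, |f x| ≤ C

/-- f is the pointwise limit of an increasing sequence from E, within B(K). -/
def UpLim {K : Type*} (E : Set (K → ℝ)) (f : K → ℝ) : Prop :=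
  Bdd f ∧ ∃ u : ℕ → K → ℝ, (∀ n, u n ∈ E) ∧ Monotone u ∧
    ∀ x, Tendsto (fun n => u n x) atTop (nhds (f x))

section aux
variable {K : Type*} [TopologicalSpace K] [DiscreteTopology K]

lemma aux_countable_ne (g : C(OnePoint K, ℝ)) :
    {x : K | g ↑x ≠ g ∞}.Countable := by
  have h : Tendsto (fun x : K => g ↑x) cofinite (nhds (g ∞)) :=
    (continuous_iff_from_discrete g).mp g.continuous
  have key : ∀ n : ℕ, {x : K | (1:ℝ)/(n+1) ≤ |g ↑x - g ∞|}.Finite := by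
    intro n
    have hpos : (0:ℝ) < 1/(n+1) := by positivity
    have := Metric.tendsto_nhds.mp h (1/(n+1)) hpos
    rw [eventually_cofinite] at this
    refine this.subset ?_
    intro x hx
    simp only [Set.mem_setOf_eq, Real.dist_eq, not_lt] at *
    exact hx
  have hsub : {x : K | g ↑x ≠ g ∞} ⊆ ⋃ n : ℕ, {x : K | (1:ℝ)/(n+1) ≤ |g ↑x - g ∞|} := by
    intro x hx
    have hpos : 0 < |g ↑x - g ∞| := by
      rw [abs_pos, sub_ne_zero]; exact hx
    obtain ⟨n, hn⟩ := exists_nat_one_div_lt hpos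
    exact Set.mem_iUnion.mpr ⟨n, le_of_lt hn⟩
  exact (Set.countable_iUnion fun n => (key n).countable).mono hsub

lemma aux_uplim_of (CK : Set (K → ℝ))
    (hCK : CK = {f | ∃ g : C(OnePoint K, ℝ), ∀ x : K, f x = g (↑x)})
    (f : K → ℝ) (c : ℝ) (hb : Bdd f) (hc : ∀ x, c ≤ f x)
    (hcnt : {x | f x ≠ c}.Countable) : UpLim CK f := by
  classical
  refine ⟨hb, ?_⟩
  rcases Set.eq_empty_or_nonempty {x | f x ≠ c} with hemp | hne
  · have hfc : ∀ x, f x = c := by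
      intro x
      by_contra h
      exact absurd (Set.eq_empty_iff_forall_notMem.mp hemp x) (by simpa using h)
    refine ⟨fun _ _ => c, fun n => ?_, monotone_const, fun x => ?_⟩
    · rw [hCK]; exact ⟨ContinuousMap.const _ c, fun x => rfl⟩
    · rw [hfc x]; exact tendsto_const_nhds
  · obtain ⟨e, he⟩ := hcnt.exists_eq_range hne
    set u : ℕ → K → ℝ := fun n x => if ∃ k < n, e k = x then f x else c - 1/(n+1) with hu
    have hmem : ∀ n, u n ∈ CK := by
      intro n
      rw [hCK]
      have hfin : {x : K | u n x ≠ c - 1/(n+1)}.Finite := by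
        refine (Set.finite_Iio n |>.image e).subset ?_
        intro x hx
        simp only [Set.mem_setOf_eq, hu] at hx
        by_cases hcond : ∃ k < n, e k = x
        · obtain ⟨k, hk, rfl⟩ := hcond
          exact ⟨k, hk, rfl⟩
        · simp [hcond] at hx
      have htend : Tendsto (u n) cofinite (nhds (c - 1/(n+1))) := by
        refine tendsto_const_nhds.congr' ?_
        rw [EventuallyEq, eventually_cofinite]
        refine hfin.subset ?_
        intro x hx
        simp only [Set.mem_setOf_eq] at *
        exact fun h => hx h.symm
      exact ⟨continuousMapMkDiscrete (u n) (c - 1/(n+1)) htend, fun x => rfl⟩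
    have hmono : Monotone u := by
      intro m n hmn x
      simp only [hu]
      by_cases hm : ∃ k < m, e k = x
      · obtain ⟨k, hk, hkx⟩ := hm
        rw [if_pos ⟨k, hk, hkx⟩, if_pos ⟨k, lt_of_lt_of_le hk hmn, hkx⟩]
      · rw [if_neg hm]
        by_cases hn : ∃ k < n, e k = x
        · rw [if_pos hn]
          have : c - 1/(m+1) ≤ c := by
            have : (0:ℝ) ≤ 1/(m+1) := by positivity
            linarith
          exact le_trans this (hc x)
        · rw [if_neg hn]
          have h1 : (1:ℝ)/(n+1) ≤ 1/(m+1) := by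
            apply one_div_le_one_div_of_le
            · positivity
            · have := (Nat.cast_le (α := ℝ)).mpr hmn; linarith
          linarith
    refine ⟨u, hmem, hmono, fun x => ?_⟩
    by_cases hx : f x = c
    · have hbound : ∀ n, c - 1/(n+1) ≤ u n x ∧ u n x ≤ c := by
        intro n
        simp only [hu]
        by_cases hcond : ∃ k < n, e k = x
        · rw [if_pos hcond, hx]
          constructor
          · have : (0:ℝ) ≤ 1/(n+1) := by positivity
            linarith
          · exact le_refl c
        · rw [if_neg hcond]
          constructor
          · exact le_refl _
          · have : (0:ℝ) < 1/(n+1) := by positivity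
            linarith
      rw [hx]
      have hlow : Tendsto (fun n : ℕ => c - 1/(n+1)) atTop (nhds c) := by
        have h0 := tendsto_one_div_add_atTop_nhds_zero_nat (𝕜 := ℝ)
        have := (tendsto_const_nhds (α := ℕ) (x := c) (f := atTop)).sub h0
        simpa using this
      exact tendsto_of_tendsto_of_tendsto_of_le_of_le hlow tendsto_const_nhds
        (fun n => (hbound n).1) (fun n => (hbound n).2)
    · have hxmem : x ∈ Set.range e := he ▸ hx
      obtain ⟨k, hk⟩ := hxmem
      have : ∀ n, n ≥ k + 1 → u n x = f x := by
        intro n hn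
        simp only [hu]
        rw [if_pos ⟨k, lt_of_lt_of_le (Nat.lt_succ_self k) hn, hk⟩]
      refine tendsto_const_nhds.congr' ?_
      rw [EventuallyEq, eventually_atTop]
      exact ⟨k + 1, fun n hn => (this n hn).symm⟩
end aux

lemma aux_uplim_const {K : Type*} [TopologicalSpace K] [DiscreteTopology K] [Uncountable K]
    (CK : Set (K → ℝ))
    (hCK : CK = {f | ∃ g : C(OnePoint K, ℝ), ∀ x : K, f x = g (↑x)})
    {f : K → ℝ} (hf : UpLim CK f) : ∃ c : ℝ, {x : K | f x ≠ c}.Countable := by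
  obtain ⟨-, u, hu, hmono, hlim⟩ := hf
  have hu' : ∀ n, ∃ g : C(OnePoint K, ℝ), ∀ x : K, u n x = g ↑x := by
    intro n; have := hu n; rwa [hCK] at this
  choose g hg using hu'
  set D : Set K := ⋃ n : ℕ, {x : K | u n x ≠ g n ∞} with hD
  have hDc : D.Countable := by
    refine Set.countable_iUnion fun n => ?_
    have : {x : K | u n x ≠ g n ∞} = {x : K | g n ↑x ≠ g n ∞} := by
      ext x; simp [hg n x]
    rw [this]
    exact aux_countable_ne (g n)
  obtain ⟨y, hy⟩ : ∃ y : K, y ∉ D := by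
    by_contra h
    push_neg at h
    have : (Set.univ : Set K).Countable := hDc.mono fun x _ => h x
    rw [Set.countable_univ_iff] at this
    exact not_countable this
  refine ⟨f y, ?_⟩
  refine hDc.mono ?_
  intro x hx
  by_contra hxD
  have heq : ∀ n, u n x = u n y := by
    intro n
    have h1 : u n x = g n ∞ := by
      by_contra h
      exact hxD (Set.mem_iUnion.mpr ⟨n, h⟩)
    have h2 : u n y = g n ∞ := by
      by_contra h
      exact hy (Set.mem_iUnion.mpr ⟨n, h⟩)
    rw [h1, h2]
  have : f x = f y := by
    refine tendsto_nhds_unique (hlim x) ?_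
    have := hlim y
    refine this.congr fun n => (heq n).symm
  exact hx this

/-- Let K be an uncountable discrete space, K_∞ its one-point
compactification, and identify C(K_∞) with its image in B(K) under restriction. Then
u(C(K_∞)) − u(C(K_∞)) = {f ∈ B(K) : ∃ c ∈ ℝ, {x : f(x) ≠ c} at most countable}, and
this space is σ-order complete. -/
theorem stmt19 {K : Type*} [TopologicalSpace K] [DiscreteTopology K] [Uncountable K]
    (CK : Set (K → ℝ))
    (hCK : CK = {f | ∃ g : C(OnePoint K, ℝ), ∀ x : K, f x = g (↑x)})
    (S : Set (K → ℝ))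
    (hS : S = {f | ∃ a b : K → ℝ, UpLim CK a ∧ UpLim CK b ∧ f = a - b}) :
    S = {f : K → ℝ | Bdd f ∧ ∃ c : ℝ, {x : K | f x ≠ c}.Countable} ∧
    -- σ-order completeness of S
    (∀ C : Set (K → ℝ), C ⊆ S → C.Countable → C.Nonempty →
      (∃ b ∈ S, ∀ g ∈ C, g ≤ b) → ∃ s ∈ S, IsLUB C s) := by
  have hSeq : S = {f : K → ℝ | Bdd f ∧ ∃ c : ℝ, {x : K | f x ≠ c}.Countable} := by
    rw [hS]
    ext f
    constructor
    · rintro ⟨a, b, ha, hb, rfl⟩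
      obtain ⟨Ca, hCa⟩ := ha.1
      obtain ⟨Cb, hCb⟩ := hb.1
      refine ⟨⟨Ca + Cb, fun x => ?_⟩, ?_⟩
      · simp only [Pi.sub_apply]
        calc |a x - b x| ≤ |a x| + |b x| := abs_sub _ _
          _ ≤ Ca + Cb := add_le_add (hCa x) (hCb x)
      · obtain ⟨ca, hca⟩ := aux_uplim_const CK hCK ha
        obtain ⟨cb, hcb⟩ := aux_uplim_const CK hCK hb
        refine ⟨ca - cb, (hca.union hcb).mono ?_⟩
        intro x hx
        simp only [Set.mem_setOf_eq, Pi.sub_apply] at hx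
        by_contra h
        simp only [Set.mem_union, Set.mem_setOf_eq, not_or, not_not] at h
        exact hx (by rw [h.1, h.2])
    · rintro ⟨⟨Cf, hCf⟩, c, hc⟩
      refine ⟨fun x => max (f x) c, fun x => max (f x) c - f x, ?_, ?_, ?_⟩
      · refine aux_uplim_of CK hCK _ c ⟨max Cf |c|, fun x => ?_⟩
          (fun x => le_max_right _ _) (hc.mono ?_)
        · rw [abs_le]
          constructor
          · have h1 : -(max Cf |c|) ≤ -|c| := neg_le_neg (le_max_right _ _)
            have h2 : -|c| ≤ c := neg_abs_le c
            have h3 : c ≤ max (f x) c := le_max_right _ _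
            linarith
          · refine max_le (le_trans (le_abs_self _) (le_trans (hCf x) (le_max_left _ _)))
              (le_trans (le_abs_self _) (le_max_right _ _))
        · intro x hx
          simp only [Set.mem_setOf_eq] at hx ⊢
          intro h
          apply hx
          rw [h, max_self]
      · refine aux_uplim_of CK hCK _ 0 ⟨max Cf |c| + Cf, fun x => ?_⟩
          (fun x => ?_) (hc.mono ?_)
        · have h1 : |max (f x) c| ≤ max Cf |c| := by
            rw [abs_le]
            constructor
            · have h1 : -(max Cf |c|) ≤ -|c| := neg_le_neg (le_max_right _ _)
              have h2 : -|c| ≤ c := neg_abs_le c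
              have h3 : c ≤ max (f x) c := le_max_right _ _
              linarith
            · refine max_le (le_trans (le_abs_self _) (le_trans (hCf x) (le_max_left _ _)))
                (le_trans (le_abs_self _) (le_max_right _ _))
          calc |max (f x) c - f x| ≤ |max (f x) c| + |f x| := abs_sub _ _
            _ ≤ max Cf |c| + Cf := add_le_add h1 (hCf x)
        · rw [sub_nonneg]; exact le_max_left _ _
        · intro x hx
          simp only [Set.mem_setOf_eq] at hx ⊢
          intro h
          apply hx
          rw [h, max_self, sub_self]
      · funext x
        simp only [Pi.sub_apply]
        ring
  refine ⟨hSeq, ?_⟩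
  intro C hCS hCcnt hCne hbdd
  obtain ⟨b, hbS, hb⟩ := hbdd
  have : Nonempty ↥C := hCne.to_subtype
  have : Countable ↥C := hCcnt.to_subtype
  set s : K → ℝ := fun x => ⨆ g : C, (g : K → ℝ) x with hs
  have hbdda : ∀ x : K, BddAbove (Set.range fun g : C => (g : K → ℝ) x) := by
    intro x
    refine ⟨b x, ?_⟩
    rintro r ⟨g, rfl⟩
    exact hb g g.2 x
  obtain ⟨g₀, hg₀⟩ := hCne
  have hub : ∀ g ∈ C, g ≤ s := by
    intro g hg x
    exact le_ciSup (hbdda x) (⟨g, hg⟩ : C)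
  have hlub : ∀ h : K → ℝ, (∀ g ∈ C, g ≤ h) → s ≤ h := by
    intro h hh x
    exact ciSup_le fun g => hh g g.2 x
  refine ⟨s, ?_, ?_, ?_⟩
  · rw [hSeq]
    constructor
    · -- bounded
      have hg₀S := hCS hg₀
      rw [hSeq] at hg₀S
      obtain ⟨⟨C0, hC0⟩, -⟩ := hg₀S
      have hbS' := hbS
      rw [hSeq] at hbS'
      obtain ⟨⟨Cb, hCb⟩, -⟩ := hbS'
      refine ⟨max C0 Cb, fun x => ?_⟩
      rw [abs_le]
      constructor
      · have h1 : -(max C0 Cb) ≤ -C0 := neg_le_neg (le_max_left _ _)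
        have h2 : -C0 ≤ g₀ x := by have := (abs_le.mp (hC0 x)).1; linarith
        have h3 : g₀ x ≤ s x := hub g₀ hg₀ x
        linarith
      · have h1 : s x ≤ b x := hlub b (fun g hg => hb g hg) x
        have h2 : b x ≤ Cb := (abs_le.mp (hCb x)).2
        exact le_trans h1 (le_trans h2 (le_max_right _ _))
    · -- countable support
      have hcs : ∀ g : C, ∃ c : ℝ, {x : K | (g : K → ℝ) x ≠ c}.Countable := by
        intro g
        have := hCS g.2
        rw [hSeq] at this
        exact this.2
      choose cc hcc using hcs
      refine ⟨⨆ g : C, cc g, ?_⟩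
      have hDc : (⋃ g : C, {x : K | (g : K → ℝ) x ≠ cc g}).Countable :=
        Set.countable_iUnion fun g => hcc g
      refine hDc.mono ?_
      intro x hx
      by_contra hxD
      apply hx
      simp only [Set.mem_setOf_eq, hs]
      refine iSup_congr fun g => ?_
      by_contra h
      exact hxD (Set.mem_iUnion.mpr ⟨g, h⟩)
  · exact hub
  · intro h hh
    exact hlub h (fun g hg => hh hg)
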